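/- Let F be a perfect field and m ≥ 2. If a₁, a₂ ∈ F are both nonzero and a₃ = ⋯ = a_m are arbitrary elements of F, then for every A ∈ M_2(F) there exist X₁, …, X_m ∈ M_2(F) with Σᵢ aᵢXᵢ² = A; in fact one may take Xᵢ = 0 for i ≥ 3. -/

import Mathlib

open Matrix

lemma sq_helper {F : Type*} [Field F] (M : Matrix (Fin 2) (Fin 2) F) (s e : F) (hs : s ≠ 0)
    (h1 : s * s = M.trace + 2 * e) (h2 : e * e = M.det) :
    (s⁻¹ • (M + e • 1)) ^ 2 = M := by
  rw [Matrix.eta_fin_two M] at h1 h2 ⊢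
  set p := M 0 0; set q := M 0 1; set r := M 1 0; set t := M 1 1
  rw [Matrix.trace_fin_two_of] at h1
  rw [Matrix.det_fin_two_of] at h2
  ext i j
  rw [pow_two]
  fin_cases i <;> fin_cases j <;>
    · simp [Matrix.mul_apply, Fin.sum_univ_two, Matrix.one_apply]
      field_simp
      first
        | linear_combination -p*h1 + h2
        | linear_combination -q*h1
        | linear_combination -r*h1
        | linear_combination -t*h1 + h2

lemma key {F : Type*} [Field F] [PerfectField F] (a b : F) (ha : a ≠ 0) (hb : b ≠ 0)
    (A : Matrix (Fin 2) (Fin 2) F) :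
    ∃ X Y : Matrix (Fin 2) (Fin 2) F, a • X ^ 2 + b • Y ^ 2 = A := by
  by_cases hchar : (2 : F) = 0
  · -- characteristic 2
    haveI : CharP F 2 := CharTwo.of_one_ne_zero_of_two_eq_zero one_ne_zero hchar
    have hsq : ∀ x : F, ∃ y : F, y * y = x := by
      intro x
      obtain ⟨y, hy⟩ := surjective_frobenius F 2 x
      exact ⟨y, by rwa [frobenius_def, pow_two] at hy⟩
    by_cases htr : A.trace = 0
    · set E : Matrix (Fin 2) (Fin 2) F := !![1,0;0,0] with hE
      have hEtr : E.trace = 1 := by simp [hE, Matrix.trace_fin_two_of]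
      have hEE : E + E = 0 := by
        ext i j
        fin_cases i <;> fin_cases j <;>
          simp [hE, ← one_add_one_eq_two] at hchar ⊢ <;> simp [hchar]
      set M0 : Matrix (Fin 2) (Fin 2) F := a⁻¹ • (A + E) with hM0
      set M1 : Matrix (Fin 2) (Fin 2) F := b⁻¹ • E with hM1
      have htr0 : M0.trace = a⁻¹ := by
        simp [hM0, Matrix.trace_smul, Matrix.trace_add, htr, hEtr]
      have htr1 : M1.trace = b⁻¹ := by
        simp [hM1, Matrix.trace_smul, hEtr]
      obtain ⟨s0, hs0⟩ := hsq M0.trace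
      obtain ⟨e0, he0⟩ := hsq M0.det
      obtain ⟨s1, hs1⟩ := hsq M1.trace
      obtain ⟨e1, he1⟩ := hsq M1.det
      have hs0' : s0 ≠ 0 := by
        intro h; rw [h, mul_zero, eq_comm, htr0] at hs0; exact (inv_ne_zero ha) hs0
      have hs1' : s1 ≠ 0 := by
        intro h; rw [h, mul_zero, eq_comm, htr1] at hs1; exact (inv_ne_zero hb) hs1
      refine ⟨s0⁻¹ • (M0 + e0 • 1), s1⁻¹ • (M1 + e1 • 1), ?_⟩
      rw [sq_helper M0 s0 e0 hs0' (by rw [hs0, hchar]; ring) he0,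
          sq_helper M1 s1 e1 hs1' (by rw [hs1, hchar]; ring) he1]
      rw [hM0, hM1, smul_smul, smul_smul, mul_inv_cancel₀ ha, mul_inv_cancel₀ hb, one_smul,
        one_smul, add_assoc, hEE, add_zero]
    · set M0 : Matrix (Fin 2) (Fin 2) F := a⁻¹ • A with hM0
      have htr0 : M0.trace ≠ 0 := by
        simp only [hM0, Matrix.trace_smul, smul_eq_mul]
        exact mul_ne_zero (inv_ne_zero ha) htr
      obtain ⟨s0, hs0⟩ := hsq M0.trace
      obtain ⟨e0, he0⟩ := hsq M0.det
      have hs0' : s0 ≠ 0 := by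
        intro h; rw [h, mul_zero, eq_comm] at hs0; exact htr0 hs0
      refine ⟨s0⁻¹ • (M0 + e0 • 1), 0, ?_⟩
      rw [sq_helper M0 s0 e0 hs0' (by rw [hs0, hchar]; ring) he0]
      rw [hM0, smul_smul, mul_inv_cancel₀ ha, one_smul]
      simp
  · -- characteristic ≠ 2
    have h4 : (4 : F) ≠ 0 := by
      intro h
      apply hchar
      have h22 : (2 : F) * 2 = 4 := by norm_num
      rcases mul_eq_zero.mp (h ▸ h22) with h' | h' <;> exact h'
    set t := A.trace with ht
    set d := A.det with hd
    set Δ := t * t - 4 * d with hΔ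
    set c : F := t / 2 - (a * a + Δ) / (4 * a) with hc
    set e : F := (a * a - Δ) / (4 * (a * a)) with he
    set M : Matrix (Fin 2) (Fin 2) F := a⁻¹ • (A - c • 1) with hM
    have h1 : (1 : F) * 1 = M.trace + 2 * e := by
      rw [hM, Matrix.trace_smul, Matrix.trace_sub, Matrix.trace_smul, Matrix.trace_one]
      rw [he, hc, hΔ]
      simp only [smul_eq_mul]
      field_simp [hchar, h4]
      rw [← ht, Fintype.card_fin]; push_cast
      ring
    have h2' : e * e = M.det := by
      rw [hM, Matrix.det_smul, Matrix.eta_fin_two (A - c • 1)]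
      simp only [Matrix.sub_apply, Matrix.smul_apply, Matrix.one_apply, Matrix.det_fin_two_of]
      norm_num
      rw [he, hc, hΔ, ht, hd, Matrix.trace_fin_two, Matrix.det_fin_two]
      field_simp [hchar, h4]
      ring
    have hX := sq_helper M 1 e one_ne_zero h1 h2'
    rw [inv_one, one_smul] at hX
    refine ⟨M + e • 1, !![0, c / b; 1, 0], ?_⟩
    have hY : (!![0, c / b; 1, 0] : Matrix (Fin 2) (Fin 2) F) ^ 2 = (c / b) • 1 := by
      rw [pow_two]
      ext i j
      fin_cases i <;> fin_cases j <;>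
        simp [Matrix.mul_apply, Fin.sum_univ_two, Matrix.one_apply]
    rw [hX, hY, hM, smul_smul, mul_inv_cancel₀ ha, one_smul, smul_smul]
    rw [mul_div_cancel₀ _ hb]
    abel

theorem stmt_11 (F : Type*) [Field F] [PerfectField F] (m : ℕ) (hm : 2 ≤ m)
    (a : Fin m → F)
    (h₁ : a ⟨0, by omega⟩ ≠ 0) (h₂ : a ⟨1, by omega⟩ ≠ 0)
    (A : Matrix (Fin 2) (Fin 2) F) :
    ∃ X : Fin m → Matrix (Fin 2) (Fin 2) F,
      (∀ i : Fin m, 2 ≤ (i : ℕ) → X i = 0) ∧ ∑ i, a i • (X i) ^ 2 = A := by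
  have h0m : 0 < m := by omega
  have h1m : 1 < m := by omega
  set i0 : Fin m := ⟨0, h0m⟩ with hi0
  set i1 : Fin m := ⟨1, h1m⟩ with hi1
  obtain ⟨X0, X1, hXY⟩ := key (a i0) (a i1) h₁ h₂ A
  refine ⟨fun i => if i = i0 then X0 else if i = i1 then X1 else 0, ?_, ?_⟩
  · intro i hi
    have hni0 : i ≠ i0 := by
      intro h; rw [h] at hi; simp [hi0] at hi
    have hni1 : i ≠ i1 := by
      intro h; rw [h] at hi; simp [hi1] at hi
    simp only [if_neg hni0, if_neg hni1]
  · have hne : i0 ≠ i1 := by simp [hi0, hi1, Fin.ext_iff]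
    rw [← Finset.sum_subset (Finset.subset_univ {i0, i1})]
    · rw [Finset.sum_pair hne]
      simp only [if_pos rfl, if_neg hne.symm]
      exact hXY
    · intro x _ hx
      simp only [Finset.mem_insert, Finset.mem_singleton, not_or] at hx
      simp only [if_neg hx.1, if_neg hx.2]
      simp
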